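/- Let A = I − E be an n×n real matrix such that |e_{ij}| ≤ ε for all i ≠ j, |e_{ii}| ≤ δ for 1 ≤ i ≤ n, and δ + (n−1)ε ≤ 1, where δ, ε ≥ 0. Then det(A) ≥ (1 − δ − (n−1)ε)(1 − δ + ε)^{n−1}. -/

import Mathlib

lemma schur_det_step (n : ℕ) (A : Matrix (Fin (n+1)) (Fin (n+1)) ℝ)
    (ha : A 0 0 ≠ 0) :
    A.det = A 0 0 * (Matrix.det (fun i j : Fin n =>
      A i.succ j.succ - A i.succ 0 / A 0 0 * A 0 j.succ)) := by
  set a := A 0 0 with ha'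
  set L : Matrix (Fin (n+1)) (Fin (n+1)) ℝ :=
    (fun i j => if i = j then 1 else if j = 0 then -(A i 0 / a) else 0) with hL
  have hLdet : L.det = 1 := by
    rw [Matrix.det_of_lowerTriangular L]
    · simp [hL]
    · intro i j hij
      have hij' : i < j := hij
      simp only [hL]
      rw [if_neg hij'.ne, if_neg]
      intro h
      exact absurd (h ▸ hij') (Fin.not_lt_zero i)
  have hLA : ∀ i j, (L * A) i j =
      if i = 0 then A 0 j else A i j - A i 0 / a * A 0 j := by
    intro i j
    rw [Matrix.mul_apply]
    by_cases hi : i = 0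
    · subst hi
      rw [if_pos rfl]
      have : ∀ k, L 0 k * A k j = if k = 0 then A 0 j else 0 := by
        intro k
        by_cases hk : k = 0
        · simp [hk, hL]
        · simp [hL, hk, Ne.symm hk]
      simp [this]
    · rw [if_neg hi]
      have : ∀ k, L i k * A k j =
          (if k = i then A i j else 0) + (if k = 0 then -(A i 0 / a) * A 0 j else 0) := by
        intro k
        by_cases hk : k = i
        · subst hk
          simp [hL, hi]
        · by_cases hk0 : k = 0
          · subst hk0
            simp only [hL]
            simp only [if_neg hi, if_true, if_neg hk]
            ring
          · simp [hL, Ne.symm hk, hk0, hk]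
      simp only [this, Finset.sum_add_distrib, Finset.sum_ite_eq', Finset.mem_univ, if_pos]
      ring
  have hdet : A.det = (L * A).det := by
    rw [Matrix.det_mul, hLdet, one_mul]
  rw [hdet, Matrix.det_succ_column_zero]
  have hcol : ∀ i : Fin (n+1), (L * A) i 0 = if i = 0 then a else 0 := by
    intro i
    rw [hLA]
    by_cases hi : i = 0
    · simp [hi]; exact ha'.symm
    · rw [if_neg hi, if_neg hi, div_mul_cancel₀ _ ha]
      ring
  have : ∀ i : Fin (n+1), (-1 : ℝ)^(i:ℕ) * (L * A) i 0 *
      ((L*A).submatrix i.succAbove Fin.succ).det =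
      if i = 0 then a * ((L*A).submatrix Fin.succ Fin.succ).det else 0 := by
    intro i
    rw [hcol]
    by_cases hi : i = 0
    · subst hi; simp
    · simp [hi]
  rw [Finset.sum_congr rfl (fun i _ => this i)]
  simp only [Finset.sum_ite_eq', Finset.mem_univ, if_pos]
  congr 1
  have h2 : (L * A).submatrix Fin.succ Fin.succ = fun i j : Fin n =>
      A i.succ j.succ - A i.succ 0 / a * A 0 j.succ := by
    funext i j
    rw [Matrix.submatrix_apply, hLA, if_neg (Fin.succ_ne_zero i)]
  rw [h2]

private lemma det_lb_key : ∀ n : ℕ, 1 ≤ n → ∀ δ ε : ℝ, 0 ≤ δ → 0 ≤ ε →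
    δ + ((n : ℝ) - 1) * ε ≤ 1 →
    ∀ E : Matrix (Fin n) (Fin n) ℝ,
    (∀ i j, i ≠ j → |E i j| ≤ ε) → (∀ i, |E i i| ≤ δ) →
    (1 - δ - ((n : ℝ) - 1) * ε) * (1 - δ + ε) ^ (n - 1) ≤ (1 - E).det := by
  intro n
  induction n with
  | zero => omega
  | succ m IH =>
    intro _ δ ε hδ hε hsize E hoff hdiag
    have hm1 : ((m + 1 : ℕ) : ℝ) - 1 = (m : ℝ) := by push_cast; ring
    rw [hm1] at hsize ⊢
    simp only [Nat.add_sub_cancel]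
    rcases Nat.eq_zero_or_pos m with hm | hm
    · subst hm
      have hdet1 : (1 - E).det = 1 - E 0 0 := by
        rw [Matrix.det_fin_one]
        simp [Matrix.sub_apply, Matrix.one_apply]
      rw [hdet1]
      have h00 := abs_le.mp (hdiag 0)
      simp only [Nat.cast_zero, pow_zero]
      nlinarith [h00.1, h00.2]
    · have hm' : (1:ℝ) ≤ (m:ℝ) := by exact_mod_cast hm
      have hδ1 : δ ≤ 1 := by nlinarith [mul_nonneg (le_trans zero_le_one hm') hε]
      rcases eq_or_lt_of_le hδ1 with hδe | hδlt
      · -- δ = 1 forces ε = 0 and E diagonal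
        have hε0 : ε = 0 := by nlinarith
        subst hε0
        have hEdiag : (1 - E) = Matrix.diagonal (fun i => 1 - E i i) := by
          ext i j
          by_cases h : i = j
          · subst h; simp [Matrix.sub_apply, Matrix.one_apply]
          · have h0 : E i j = 0 := by
              have := hoff i j h
              have := abs_nonneg (E i j)
              have : |E i j| = 0 := le_antisymm (hoff i j h) (abs_nonneg _)
              exact abs_eq_zero.mp this
            simp [Matrix.sub_apply, Matrix.one_apply, h, h0, Matrix.diagonal_apply_ne _ h]
        rw [hEdiag, Matrix.det_diagonal]
        have hle : (1 - δ - (m:ℝ) * 0) * (1 - δ + 0) ^ m = 0 := by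
          rw [← hδe]; ring_nf
        rw [hle]
        apply Finset.prod_nonneg
        intro i _
        have := abs_le.mp (hdiag i)
        linarith [this.2, hδe]
      · -- main case : δ < 1
        have h1δ : 0 < 1 - δ := by linarith
        set A : Matrix (Fin (m+1)) (Fin (m+1)) ℝ := 1 - E with hAdef
        have hA00 : A 0 0 = 1 - E 0 0 := by
          simp [hAdef, Matrix.sub_apply, Matrix.one_apply]
        have h000 := abs_le.mp (hdiag 0)
        have haL : 1 - δ ≤ A 0 0 := by rw [hA00]; linarith [h000.2]
        have ha0 : 0 < A 0 0 := lt_of_lt_of_le h1δ haL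
        set E' : Matrix (Fin m) (Fin m) ℝ :=
          fun i j => E i.succ j.succ + E i.succ 0 * E 0 j.succ / A 0 0 with hE'def
        have hS : (fun i j : Fin m =>
            A i.succ j.succ - A i.succ 0 / A 0 0 * A 0 j.succ)
            = (1 - E' : Matrix (Fin m) (Fin m) ℝ) := by
          funext i j
          have h1 : A i.succ 0 = -E i.succ 0 := by
            simp [hAdef, Matrix.sub_apply, Matrix.one_apply, Fin.succ_ne_zero i]
          have h2 : A 0 j.succ = -E 0 j.succ := by
            simp [hAdef, Matrix.sub_apply, Matrix.one_apply, (Fin.succ_ne_zero j).symm]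
          have h3 : A i.succ j.succ = (if i = j then (1:ℝ) else 0) - E i.succ j.succ := by
            simp [hAdef, Matrix.sub_apply, Matrix.one_apply, Fin.succ_inj]
          rw [h1, h2, h3]
          rw [Matrix.sub_apply]; simp only [Matrix.one_apply, hE'def]
          ring
        have hdet : A.det = A 0 0 * (1 - E').det := by
          rw [schur_det_step m A (ne_of_gt ha0), hS]
        set q : ℝ := ε ^ 2 / (1 - δ) with hqdef
        have hq : 0 ≤ q := div_nonneg (sq_nonneg ε) h1δ.le
        have hcross : ∀ i j : Fin m, |E i.succ 0 * E 0 j.succ / A 0 0| ≤ q := by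
          intro i j
          have h1 : |E i.succ 0| ≤ ε := hoff _ _ (Fin.succ_ne_zero i)
          have h2 : |E 0 j.succ| ≤ ε := hoff _ _ (Fin.succ_ne_zero j).symm
          calc |E i.succ 0 * E 0 j.succ / A 0 0|
              = |E i.succ 0| * |E 0 j.succ| / A 0 0 := by
                rw [abs_div, abs_mul, abs_of_pos ha0]
            _ ≤ ε * ε / A 0 0 := by gcongr
            _ ≤ ε * ε / (1 - δ) := by gcongr
            _ = q := by rw [hqdef]; ring
        have ho' : ∀ i j, i ≠ j → |E' i j| ≤ ε + q := by
          intro i j hij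
          have h1 : |E i.succ j.succ| ≤ ε :=
            hoff _ _ (fun h => hij (Fin.succ_inj.mp h))
          calc |E' i j| ≤ |E i.succ j.succ| + |E i.succ 0 * E 0 j.succ / A 0 0| :=
                abs_add_le _ _
            _ ≤ ε + q := add_le_add h1 (hcross i j)
        have hd' : ∀ i, |E' i i| ≤ δ + q := by
          intro i
          calc |E' i i| ≤ |E i.succ i.succ| + |E i.succ 0 * E 0 i.succ / A 0 0| :=
                abs_add_le _ _
            _ ≤ δ + q := add_le_add (hdiag i.succ) (hcross i i)
        have hmε : (m:ℝ) * ε ≤ 1 - δ := by linarith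
        have hmq : (m:ℝ) * q ≤ ε := by
          rw [hqdef, mul_div_assoc']
          rw [div_le_iff₀ h1δ]
          nlinarith
        have hsize' : (δ + q) + ((m:ℝ) - 1) * (ε + q) ≤ 1 := by nlinarith
        have IHb := IH hm (δ + q) (ε + q) (by linarith) (by linarith) hsize' E' ho' hd'
        -- assemble
        set B1 : ℝ := 1 - (δ + q) - ((m:ℝ) - 1) * (ε + q) with hB1def
        have hB1 : 0 ≤ B1 := by rw [hB1def]; linarith
        have hee : 1 - (δ + q) + (ε + q) = 1 - δ + ε := by ring
        have hP : 0 ≤ (1 - (δ + q) + (ε + q)) ^ (m - 1) := by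
          rw [hee]; positivity
        have hq2 : (1 - δ) * q = ε ^ 2 := by
          rw [hqdef]; field_simp
        have hid : (1 - δ) * B1 = (1 - δ - (m:ℝ) * ε) * (1 - δ + ε) := by
          rw [hB1def]; linear_combination (-(m:ℝ)) * hq2
        have hpow : (1 - δ + ε) ^ m = (1 - δ + ε) * (1 - δ + ε) ^ (m - 1) := by
          conv_lhs => rw [← Nat.succ_pred_eq_of_pos hm]
          rw [pow_succ']
          rfl
        calc (1 - δ - (m:ℝ) * ε) * (1 - δ + ε) ^ m
            = ((1 - δ) * B1) * (1 - δ + ε) ^ (m - 1) := by rw [hpow, hid]; ring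
          _ = (1 - δ) * (B1 * (1 - (δ + q) + (ε + q)) ^ (m - 1)) := by rw [hee]; ring
          _ ≤ A 0 0 * (B1 * (1 - (δ + q) + (ε + q)) ^ (m - 1)) := by
              apply mul_le_mul_of_nonneg_right haL
              exact mul_nonneg hB1 hP
          _ ≤ A 0 0 * (1 - E').det := by
              apply mul_le_mul_of_nonneg_left IHb ha0.le
          _ = A.det := hdet.symm

/-- If `A = I - E` is an `n × n` real matrix with `|e i j| ≤ ε` for `i ≠ j`,
`|e i i| ≤ δ`, and `δ + (n-1) ε ≤ 1` (with `δ, ε ≥ 0`), then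
`det A ≥ (1 - δ - (n-1) ε) (1 - δ + ε)^(n-1)`. -/
theorem det_lower_bound_two_sided_diag
    (n : ℕ) (hn : 1 ≤ n) (δ ε : ℝ) (hδ : 0 ≤ δ) (hε : 0 ≤ ε)
    (hsize : δ + ((n : ℝ) - 1) * ε ≤ 1)
    (E A : Matrix (Fin n) (Fin n) ℝ)
    (hA : A = 1 - E)
    (hoff : ∀ i j, i ≠ j → |E i j| ≤ ε)
    (hdiag : ∀ i, |E i i| ≤ δ) :
    (1 - δ - ((n : ℝ) - 1) * ε) * (1 - δ + ε) ^ (n - 1) ≤ A.det := by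
  subst hA
  exact det_lb_key n hn δ ε hδ hε hsize E hoff hdiag
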